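/- Let n ≥ 1 and let a weighted matrix digraph on vertices {0,1,…,n} be given by a finite arc type E with source map s and target map t as above. Let S ⊆ E be a subset of arcs with |S| = n such that every vertex i ∈ {1,…,n} is the target of exactly one arc of S. Form the n×n integer matrix M_S with rows indexed by {1,…,n} and columns indexed by S via the bijection e ↦ t(e), whose (i,e) entry is [t(e)=i] − [s(e)=i] (i.e. the incidence matrix with row 0 struck). If S contains a directed cycle (a nonempty sequence of arcs e_1,…,e_r of S with t(e_k) = s(e_{k+1}) for k < r and t(e_r) = s(e_1)), then det(M_S) = 0. -/

import Mathlib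

attribute [local instance] Classical.propDecidable

def HasCycleIn {V E : Type*} (s t : E → V) (S : Finset E) : Prop :=
  ∃ (l : List E) (hl : l ≠ []), (∀ e ∈ l, e ∈ S) ∧
    List.Chain' (fun e f => t e = s f) l ∧ t (l.getLast hl) = s (l.head hl)

lemma tele {V E : Type*} (s t : E → V) (f : V → ℤ) :
    ∀ (l : List E) (hl : l ≠ []), List.Chain' (fun e f => t e = s f) l →
      (l.map (fun e => f (t e) - f (s e))).sum
        = f (t (l.getLast hl)) - f (s (l.head hl))
  | [], hl, _ => absurd rfl hl
  | [a], _, _ => by simp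
  | a :: b :: r, _, hc => by
      obtain ⟨hab, hc'⟩ := List.isChain_cons_cons.mp hc
      have ih := tele s t f (b :: r) (by simp) hc'
      simp only [List.map_cons, List.sum_cons] at ih ⊢
      rw [List.getLast_cons (by simp)]
      rw [ih, hab]
      simp only [List.head_cons]
      ring

def sumHom (n : ℕ) : (Fin n → ℤ) →+ ℤ where
  toFun := fun f => ∑ j, f j
  map_zero' := by simp
  map_add' := by intro f g; simp [Finset.sum_add_distrib]

@[simp] lemma sumHom_apply (n : ℕ) (f : Fin n → ℤ) : sumHom n f = ∑ j, f j := rfl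

theorem det_incidence_submatrix_eq_zero_of_cycle
    (n : ℕ) (hn : 1 ≤ n)
    (E : Type*) [Fintype E] [DecidableEq E]
    (s t : E → Fin (n + 1))
    (ht : ∀ e, t e ≠ 0) (hs : ∀ e, s e ≠ t e)
    (S : Finset E) (hcard : S.card = n)
    (hone : ∀ i : Fin (n + 1), i ≠ 0 → ∃! e, e ∈ S ∧ t e = i)
    (φ : {e // e ∈ S} ≃ Fin n)
    (hφ : ∀ e : {e // e ∈ S}, t e.1 = (φ e).succ)
    (MS : Matrix (Fin n) (Fin n) ℤ)
    (hMS : ∀ i j, MS i j =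
      (if t (φ.symm j).1 = i.succ then 1 else 0) - (if s (φ.symm j).1 = i.succ then 1 else 0))
    (hcyc : HasCycleIn s t S) :
    MS.det = 0 := by
  obtain ⟨l, hl, hlS, hchain, hwrap⟩ := hcyc
  rw [← Matrix.exists_mulVec_eq_zero_iff]
  set v : Fin n → ℤ :=
    (l.attach.map (fun e => Pi.single (φ ⟨e.1, hlS e.1 e.2⟩) (1 : ℤ))).sum with hv
  refine ⟨v, ?_, ?_⟩
  · -- v ≠ 0 : summing all coordinates gives l.length > 0
    intro hv0
    have h0 : sumHom n v = 0 := by rw [hv0]; exact (sumHom n).map_zero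
    rw [hv, map_list_sum] at h0
    simp only [List.map_map] at h0
    have heach : ∀ x ∈ l.attach.map ((sumHom n) ∘
        (fun e : {x // x ∈ l} => Pi.single (φ ⟨e.1, hlS e.1 e.2⟩) (1 : ℤ))), x = 1 := by
      intro x hx
      simp only [List.mem_map, Function.comp] at hx
      obtain ⟨e, _, rfl⟩ := hx
      simp [Finset.sum_pi_single]
    rw [List.sum_eq_card_nsmul _ 1 (by simpa using heach)] at h0
    simp at h0
    exact hl (List.eq_nil_of_length_eq_zero (by simpa using h0))
  · -- mulVec v = 0
    funext i
    have hlin : MS.mulVec v = (l.attach.map (fun e =>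
        MS.mulVec (Pi.single (φ ⟨e.1, hlS e.1 e.2⟩) (1 : ℤ)))).sum := by
      rw [hv]
      have h := map_list_sum (Matrix.mulVecLin MS)
        (l.attach.map (fun e => Pi.single (φ ⟨e.1, hlS e.1 e.2⟩) (1 : ℤ)))
      simpa only [Matrix.mulVecLin_apply, List.map_map, Function.comp_def] using h
    have heval : MS.mulVec v i = (l.attach.map (fun e =>
        MS.mulVec (Pi.single (φ ⟨e.1, hlS e.1 e.2⟩) (1 : ℤ)) i)).sum := by
      rw [hlin]
      have h := map_list_sum (Pi.evalAddMonoidHom (fun _ : Fin n => ℤ) i)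
        (l.attach.map (fun e => MS.mulVec (Pi.single (φ ⟨e.1, hlS e.1 e.2⟩) (1 : ℤ))))
      simpa only [Pi.evalAddMonoidHom_apply, List.map_map, Function.comp_def] using h
    rw [heval]
    have hterm : ∀ e : {x // x ∈ l},
        MS.mulVec (Pi.single (φ ⟨e.1, hlS e.1 e.2⟩) (1 : ℤ)) i
          = (if t e.1 = i.succ then (1:ℤ) else 0) - (if s e.1 = i.succ then 1 else 0) := by
      intro e
      rw [Matrix.mulVec_single]
      simp only [Pi.smul_apply, Matrix.col_apply, MulOpposite.op_one, one_smul]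
      rw [hMS, Equiv.symm_apply_apply]
    simp only [hterm]
    rw [List.attach_map_val (l := l)
      (f := fun e => (if t e = i.succ then (1:ℤ) else 0) - (if s e = i.succ then 1 else 0))]
    rw [tele s t (fun x => if x = i.succ then (1:ℤ) else 0) l hl hchain, hwrap]
    simp [Pi.zero_apply]
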